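/- Let S be a semigroup and a, b ∈ S group elements. Then a ∼ₚ b if and only if there exist mutually inverse elements u, v ∈ S (u = uvu, v = vuv) such that b = u a v and a = v b u. -/
import Mathlib


variable {S : Type*} [Semigroup S]

/-- Primary conjugacy: `a = x*y` and `b = y*x` for some `x, y`. -/
def PConj (a b : S) : Prop := ∃ x y : S, a = x * y ∧ b = y * x

/-- Conjugacy: the transitive closure of primary conjugacy. -/
def SConj : S → S → Prop := Relation.TransGen PConj

/-- `pw a n` is `a ^ n` for `n ≥ 1` (with junk value `a` at `n = 0`). -/
def pw (a : S) : ℕ → S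
  | 0 => a
  | 1 => a
  | n + 2 => pw a (n + 1) * a

/-- An element is a group element iff it lies in some subgroup of `S`:
there is an idempotent `e` acting as identity on `a`, and an inverse of `a`
relative to `e`. -/
def IsGroupElement (a : S) : Prop :=
  ∃ e b : S, e * e = e ∧ e * a = a ∧ a * e = a ∧ a * b = e ∧ b * a = e

/-- An element is group-bound if some positive power is a group element. -/
def GroupBound (a : S) : Prop := ∃ n : ℕ, 1 ≤ n ∧ IsGroupElement (pw a n)

/-- Green's L-relation: same principal left ideal in `S¹`. -/
def LRel (a b : S) : Prop :=
  (∃ u : WithOne S, u * (a : WithOne S) = (b : WithOne S)) ∧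
  (∃ u : WithOne S, u * (b : WithOne S) = (a : WithOne S))

/-- Green's R-relation: same principal right ideal in `S¹`. -/
def RRel (a b : S) : Prop :=
  (∃ u : WithOne S, (a : WithOne S) * u = (b : WithOne S)) ∧
  (∃ u : WithOne S, (b : WithOne S) * u = (a : WithOne S))

/-- Green's H-relation. -/
def HRel (a b : S) : Prop := LRel a b ∧ RRel a b

/-- Green's D-relation. -/
def DRel (a b : S) : Prop := ∃ c : S, LRel a c ∧ RRel c b

private lemma mulrw {T : Type*} [Semigroup T] {p q r : T} (h : p * q = r) (z : T) :
    p * (q * z) = r * z := by rw [← mul_assoc, h]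

theorem pconj_iff_mutually_inverse (a b : S)
    (ha : IsGroupElement a) (hb : IsGroupElement b) :
    PConj a b ↔ ∃ u v : S, u = u * v * u ∧ v = v * u * v ∧
      b = u * a * v ∧ a = v * b * u := by
  constructor
  · rintro ⟨x, y, hx, hy⟩
    obtain ⟨e, a1, he, hea, hae, _, ha1a⟩ := ha
    obtain ⟨f, b1, hf, hfb, hbf, hbb1, hb1b⟩ := hb
    set b' : S := f * (b1 * f) with hb'
    have k5 : b' * b = f := by
      rw [hb', mul_assoc, mul_assoc, hfb, hb1b, hf]
    have k4 : b * b' = f := by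
      rw [hb', ← mul_assoc, hbf, ← mul_assoc, hbb1, hf]
    have k6 : b' * f = b' := by
      rw [hb', mul_assoc, mul_assoc, hf]
    have k7 : f * b' = b' := by
      rw [hb', ← mul_assoc, hf]
    -- key composite identities
    have hx' : ∀ z : S, x * (y * z) = a * z := fun z => by rw [← mul_assoc, ← hx]
    have hy' : ∀ z : S, y * (x * z) = b * z := fun z => by rw [← mul_assoc, ← hy]
    have D1' : ∀ z : S, y * (a * (x * z)) = b * (b * z) := fun z => by
      rw [hx, mul_assoc, hy', hy']
    have E0' : ∀ z : S, a * (x * (f * (y * z))) = a * (a * z) := fun z =>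
      calc a * (x * (f * (y * z))) = x * (y * (x * (f * (y * z)))) := by
            rw [hx, mul_assoc]
        _ = x * (b * (f * (y * z))) := by rw [hy']
        _ = x * (b * (y * z)) := by rw [mulrw hbf]
        _ = x * (y * (x * (y * z))) := by rw [← hy']
        _ = a * (a * z) := by rw [hx', hx']
    have E' : ∀ z : S, e * (x * (f * (y * z))) = a * z := fun z =>
      calc e * (x * (f * (y * z))) = a1 * (a * (x * (f * (y * z)))) := by
            rw [← ha1a, mul_assoc]
        _ = a1 * (a * (a * z)) := by rw [E0']
        _ = a * z := by rw [← mul_assoc, ha1a, mulrw hea]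
    have F0' : ∀ z : S, b * (y * (e * (x * z))) = b * (b * z) := fun z =>
      calc b * (y * (e * (x * z))) = y * (x * (y * (e * (x * z)))) := by
            rw [hy, mul_assoc]
        _ = y * (a * (e * (x * z))) := by rw [hx']
        _ = y * (a * (x * z)) := by rw [mulrw hae]
        _ = b * (b * z) := D1' z
    have F' : ∀ z : S, f * (y * (e * (x * z))) = b * z := fun z =>
      calc f * (y * (e * (x * z))) = b' * (b * (y * (e * (x * z)))) := by
            rw [← k5, mul_assoc]
        _ = b' * (b * (b * z)) := by rw [F0']
        _ = b * z := by rw [← mul_assoc, k5, mulrw hfb]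
    have D4' : ∀ z : S, b' * (y * (e * (x * z))) = f * z := fun z =>
      calc b' * (y * (e * (x * z))) = b' * (f * (y * (e * (x * z)))) := by
            rw [mulrw k6]
        _ = b' * (b * z) := by rw [F']
        _ = f * z := by rw [← mul_assoc, k5]
    refine ⟨f * (y * e), e * (x * b'), ?_, ?_, ?_, ?_⟩
    · simp only [mul_assoc, mulrw he, mulrw k6, F', mulrw k4]
    · simp only [mul_assoc, mulrw k6, mulrw he, D4', k7, mulrw k7]
    · simp only [mul_assoc, mulrw hea, mulrw hae, D1', k4, mulrw k4, hbf, mulrw hbf, hfb,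
        mulrw hfb]
    · simp only [mul_assoc, mulrw k5, mulrw hf, E', hae]
  · rintro ⟨u, v, huvu, _, hb2, ha2⟩
    refine ⟨v * b, u, ha2, ?_⟩
    calc b = u * a * v := hb2
      _ = (u * v * u) * a * v := by rw [← huvu]
      _ = u * (v * (u * a * v)) := by simp only [mul_assoc]
      _ = u * (v * b) := by rw [← hb2]
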